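/- Let α = [0;2,\overline{r}] with r ≥ 1 and let k, m ∈ ℕ be such that 0 ≤ k ≤ q_{m+1} − 2. If v denotes the prefix of c_α of length k, then the k-th right conjugate of σ^m satisfies (σ^m)_k(c_α) = v⁻¹c_α; that is, applying (σ^m)_k to c_α deletes its first k letters. -/

import Mathlib

/-- The two-letter alphabet 𝒜 = {a, b}. -/
inductive AB : Type
  | a : AB
  | b : AB
deriving DecidableEq, Repr

/-- Apply a morphism (determined by its images on the letters) to a finite word. -/
def applyM (g : AB → List AB) (w : List AB) : List AB := w.flatMap g

/-- The exchange morphism E : a ↦ b, b ↦ a. -/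
def Em : AB → List AB
  | AB.a => [AB.b]
  | AB.b => [AB.a]

/-- The morphism φ : a ↦ ab, b ↦ a. -/
def phim : AB → List AB
  | AB.a => [AB.a, AB.b]
  | AB.b => [AB.a]

/-- Composition of morphisms: `compM g h` applies `h` first, then `g`. -/
def compM (g h : AB → List AB) : AB → List AB := fun c => applyM g (h c)

/-- Powers of a morphism. -/
def mpow (g : AB → List AB) : ℕ → AB → List AB
  | 0 => fun c => [c]
  | n + 1 => compM g (mpow g n)

/-- A morphism is standard iff it is a composition of E and φ (in any number and order). -/
inductive IsStandard : (AB → List AB) → Prop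
  | id : IsStandard (fun c => [c])
  | compE {ψ : AB → List AB} : IsStandard ψ → IsStandard (compM ψ Em)
  | compPhi {ψ : AB → List AB} : IsStandard ψ → IsStandard (compM ψ phim)

/-- `IsRightConj ψ ξ k` : ξ is the k-th right conjugate of ψ, i.e. there is a word u
of length k with ψ(w)u = uξ(w) for all finite words w. -/
def IsRightConj (ψ ξ : AB → List AB) (k : ℕ) : Prop :=
  ∃ u : List AB, u.length = k ∧ ∀ w : List AB, applyM ψ w ++ u = u ++ applyM ξ w

/-- w^k (power of a finite word under concatenation). -/
def lpow (w : List AB) : ℕ → List AB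
  | 0 => []
  | k + 1 => w ++ lpow w k

/-- Standard sequence associated with a directive sequence (d₁, d₂, …) (here `d`
is indexed so that `d i` is dᵢ for i ≥ 1): `sseq d 0 = s₋₁ = b`, `sseq d (n+1) = sₙ`,
with s₀ = a and sₙ = sₙ₋₁^{dₙ} sₙ₋₂. -/
def sseq (d : ℕ → ℕ) : ℕ → List AB
  | 0 => [AB.b]
  | 1 => [AB.a]
  | n + 2 => lpow (sseq d (n + 1)) (d (n + 1)) ++ sseq d n

/-- Convergent denominators: `qseq d n` = qₙ = |sₙ| (q₀ = 1, q₁ = 1 + d₁,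
qₙ = dₙqₙ₋₁ + qₙ₋₂). -/
def qseq (d : ℕ → ℕ) : ℕ → ℕ
  | 0 => 1
  | 1 => 1 + d 1
  | n + 2 => d (n + 2) * qseq d (n + 1) + qseq d n

/-- `PrefInf u x` : the finite word u is a prefix of the infinite word x. -/
def PrefInf (u : List AB) (x : ℕ → AB) : Prop :=
  ∀ i, i < u.length → u.getD i AB.a = x i

/-- Image of an infinite word under a (non-erasing) morphism, letter by letter. -/
def applyInf (g : AB → List AB) (x : ℕ → AB) : ℕ → AB :=
  fun i => (applyM g ((List.range (i + 1)).map x)).getD i AB.a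

/-- `IsProdInf u x` : the infinite word x is the infinite product u 0 · u 1 · u 2 ⋯,
i.e. every finite partial product is a prefix of x. -/
def IsProdInf (u : ℕ → List AB) (x : ℕ → AB) : Prop :=
  ∀ n, PrefInf (((List.range n).map u).flatten) x

/-- Adjoining singular words: `vword d k` is the adjoining singular word v_{k-1}
(so `vword d 0 = v₋₁`), where vₙ = a·sₙ₊₁^{d_{n+2}−1}sₙ·b⁻¹ for n odd and
vₙ = b·sₙ₊₁^{d_{n+2}−1}sₙ·a⁻¹ for n even. -/
def vword (d : ℕ → ℕ) (k : ℕ) : List AB :=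
  (if k % 2 = 0 then AB.a else AB.b) ::
    (lpow (sseq d (k + 1)) (d (k + 1) - 1) ++ sseq d k).dropLast

/-- Singular words: `wword d k` is the singular word w_{k-2}
(w₋₂ = ε, w₋₁ = a, w₀ = b, and wₙ = a·sₙ·b⁻¹ for n ≥ 1 odd, wₙ = b·sₙ·a⁻¹ for n even). -/
def wword (d : ℕ → ℕ) : ℕ → List AB
  | 0 => []
  | 1 => [AB.a]
  | 2 => [AB.b]
  | k + 3 =>
      (if (k + 1) % 2 = 1 then AB.a else AB.b) :: (sseq d (k + 2)).dropLast

/-- The standard morphism σ associated with a type (i) Sturm number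
α = [0;1+d₁,\overline{d₂,…,dₙ}] : σ(a) = sₙ₋₁, σ(b) = sₙ₋₁^{dₙ−d₁} sₙ₋₂. -/
def sigmaGen (d : ℕ → ℕ) (n : ℕ) : AB → List AB
  | AB.a => sseq d n
  | AB.b => lpow (sseq d n) (d n - d 1) ++ sseq d (n - 1)

/-- The directive sequence of α = [0;2,\overline{r}] : d₁ = 1, dᵢ = r for i ≥ 2. -/
def dseq (r : ℕ) : ℕ → ℕ := fun i => if i ≤ 1 then 1 else r

/-- The directive sequence of 1 − α = [0;1,d₁,\overline{d₂,…,dₙ}] obtained from that of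
α = [0;1+d₁,\overline{d₂,…,dₙ}] : ê₁ = 0 and êᵢ = dᵢ₋₁ for i ≥ 2. -/
def dhat (d : ℕ → ℕ) : ℕ → ℕ := fun i => if i ≤ 1 then 0 else d (i - 1)

/-- `Generates ψ c x` : ψ is prolongable on the letter c and x = ψ^ω(c), i.e. every
ψ^m(c) is a prefix of x. -/
def Generates (ψ : AB → List AB) (c : AB) (x : ℕ → AB) : Prop :=
  (∃ w : List AB, w ≠ [] ∧ ψ c = c :: w) ∧ ∀ m, PrefInf (mpow ψ m c) x

/-- Fibonacci numbers, shifted: `fibw k = F_{k-1}`, so fibw 0 = F₋₁ = 1,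
fibw 1 = F₀ = 1, Fₙ = Fₙ₋₁ + Fₙ₋₂. -/
def fibw : ℕ → ℕ
  | 0 => 1
  | 1 => 1
  | n + 2 => fibw (n + 1) + fibw n

/-- `HasCF γ a` : γ has continued fraction expansion [0; a 1, a 2, a 3, …]. -/
def HasCF (γ : ℝ) (a : ℕ → ℕ) : Prop :=
  ∃ x : ℕ → ℝ, x 0 = γ ∧ (∀ i, 0 < x i ∧ x i < 1) ∧
    ∀ i, 1 / x i = (a (i + 1) : ℝ) + x (i + 1)

/-- γ has a continued fraction expansion of type (i):
γ = [0;1+d₁,\overline{d₂,…,dₙ}] < 1/2 with dₙ ≥ d₁ ≥ 1. -/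
def CFTypeI (γ : ℝ) : Prop :=
  ∃ a : ℕ → ℕ, HasCF γ a ∧ γ < 1 / 2 ∧
    ∃ n : ℕ, 2 ≤ n ∧ ∃ d : ℕ → ℕ,
      (∀ i, 1 ≤ i → 1 ≤ d i) ∧ a 1 = 1 + d 1 ∧ (∀ i, 2 ≤ i → a i = d i) ∧
      (∀ i, 2 ≤ i → d (i + (n - 1)) = d i) ∧ d 1 ≤ d n

/-- γ has a continued fraction expansion of type (ii):
γ = [0;1,d₁,\overline{d₂,…,dₙ}] > 1/2 with dₙ ≥ d₁. -/
def CFTypeII (γ : ℝ) : Prop :=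
  ∃ a : ℕ → ℕ, HasCF γ a ∧ 1 / 2 < γ ∧
    ∃ n : ℕ, 2 ≤ n ∧ ∃ d : ℕ → ℕ,
      (∀ i, 1 ≤ i → 1 ≤ d i) ∧ a 1 = 1 ∧ (∀ i, 2 ≤ i → a i = d (i - 1)) ∧
      (∀ i, 2 ≤ i → d (i + (n - 1)) = d i) ∧ d 1 ≤ d n

/-- A Sturm number: an irrational γ ∈ (0,1) whose continued fraction expansion is of
type (i) or type (ii). -/
def IsSturmNumber (γ : ℝ) : Prop :=
  Irrational γ ∧ 0 < γ ∧ γ < 1 ∧ (CFTypeI γ ∨ CFTypeII γ)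

section Aux

lemma applyM_append (g : AB → List AB) (w1 w2 : List AB) :
    applyM g (w1 ++ w2) = applyM g w1 ++ applyM g w2 := List.flatMap_append ..

lemma applyM_comp (g h : AB → List AB) (w : List AB) :
    applyM (compM g h) w = applyM g (applyM h w) := by
  unfold applyM compM applyM
  exact (List.flatMap_assoc).symm

lemma applyM_lpow (g : AB → List AB) (w : List AB) (n : ℕ) :
    applyM g (lpow w n) = lpow (applyM g w) n := by
  induction n with
  | zero => rfl
  | succ n ih => simp only [lpow, applyM_append, ih]

lemma lpow_length (w : List AB) (n : ℕ) : (lpow w n).length = n * w.length := by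
  induction n with
  | zero => simp [lpow]
  | succ n ih => simp [lpow, ih, Nat.succ_mul]; ring

lemma dseq_one (r : ℕ) : dseq r 1 = 1 := rfl

lemma dseq_ge2 (r n : ℕ) (h : 2 ≤ n) : dseq r n = r := by
  simp [dseq]; omega

lemma sseq_ne (d : ℕ → ℕ) : ∀ n, sseq d n ≠ []
  | 0 => by simp [sseq]
  | 1 => by simp [sseq]
  | (n+2) => by
      simp only [sseq]
      intro h
      exact sseq_ne d n (List.append_eq_nil_iff.mp h).2

lemma sseq_two (r : ℕ) : sseq (dseq r) 2 = [AB.a, AB.b] := by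
  show lpow (sseq (dseq r) 1) (dseq r 1) ++ sseq (dseq r) 0 = _
  rfl

lemma applyM_singleton (g : AB → List AB) (z : AB) : applyM g [z] = g z := by
  simp [applyM]

lemma sigma_sseq (r : ℕ) (hr : 1 ≤ r) :
    ∀ n, applyM (sigmaGen (dseq r) 2) (sseq (dseq r) (n+1)) = sseq (dseq r) (n+2)
  | 0 => by
      show applyM _ [AB.a] = _
      rw [applyM_singleton]
      rfl
  | 1 => by
      rw [sseq_two]
      show applyM _ ([AB.a] ++ [AB.b]) = _
      rw [applyM_append, applyM_singleton, applyM_singleton]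
      show sseq (dseq r) 2 ++ (lpow (sseq (dseq r) 2) (dseq r 2 - dseq r 1) ++ sseq (dseq r) 1)
        = lpow (sseq (dseq r) 2) (dseq r 2) ++ sseq (dseq r) 1
      rw [← List.append_assoc]
      congr 1
      rw [dseq_ge2 r 2 (by norm_num), dseq_one]
      rw [show r = r - 1 + 1 from by omega]
      rw [show r - 1 + 1 - 1 = r - 1 from by omega]
      rfl
  | (n+2) => by
      have h1 := sigma_sseq r hr (n+1)
      have h2 := sigma_sseq r hr n
      show applyM _ (lpow (sseq (dseq r) (n+2)) (dseq r (n+2)) ++ sseq (dseq r) (n+1)) = _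
      rw [applyM_append, applyM_lpow, h1, h2]
      show _ = lpow (sseq (dseq r) (n+3)) (dseq r (n+3)) ++ sseq (dseq r) (n+2)
      rw [dseq_ge2 r (n+2) (by omega), dseq_ge2 r (n+3) (by omega)]

lemma mpow_sseq (r : ℕ) (hr : 1 ≤ r) (m : ℕ) :
    ∀ n, applyM (mpow (sigmaGen (dseq r) 2) m) (sseq (dseq r) (n+1)) = sseq (dseq r) (n+1+m) := by
  induction m with
  | zero => intro n; simp [mpow, applyM]
  | succ m ih =>
      intro n
      show applyM (compM _ _) _ = _
      rw [applyM_comp, ih n, show n+1+m = (n+m)+1 from by omega,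
        sigma_sseq r hr (n+m), show n+1+(m+1) = (n+m)+2 from by omega]

lemma sigma_ne (r : ℕ) (z : AB) : sigmaGen (dseq r) 2 z ≠ [] := by
  cases z
  · exact sseq_ne _ 2
  · show lpow _ _ ++ sseq (dseq r) 1 ≠ []
    intro h
    exact sseq_ne (dseq r) 1 (List.append_eq_nil_iff.mp h).2

lemma applyM_length_ge (g : AB → List AB) (hg : ∀ z, g z ≠ []) (w : List AB) :
    w.length ≤ (applyM g w).length := by
  induction w with
  | nil => simp [applyM]
  | cons z t ih =>
      have : applyM g (z :: t) = g z ++ applyM g t := rfl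
      rw [this, List.length_append, List.length_cons]
      have h1 : 1 ≤ (g z).length := List.length_pos_iff.mpr (hg z)
      omega

lemma mpow_ne (r : ℕ) (m : ℕ) (z : AB) : mpow (sigmaGen (dseq r) 2) m z ≠ [] := by
  induction m with
  | zero => simp [mpow]
  | succ m ih =>
      show applyM _ (mpow _ m z) ≠ []
      intro h
      have h0 : 1 ≤ (mpow (sigmaGen (dseq r) 2) m z).length := List.length_pos_iff.mpr ih
      have := applyM_length_ge (sigmaGen (dseq r) 2) (sigma_ne r)
        (mpow (sigmaGen (dseq r) 2) m z)
      rw [h, List.length_nil] at *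
      omega

lemma sseq_len_ge (r : ℕ) (hr : 1 ≤ r) : ∀ n, n ≤ (sseq (dseq r) (n+1)).length
  | 0 => Nat.zero_le _
  | 1 => by rw [sseq_two]; norm_num
  | (n+2) => by
      have ih : n + 1 ≤ (sseq (dseq r) (n+2)).length := sseq_len_ge r hr (n+1)
      have h1 : 1 ≤ (sseq (dseq r) (n+1)).length := List.length_pos_iff.mpr (sseq_ne _ _)
      show n + 2 ≤ (lpow (sseq (dseq r) (n+2)) (dseq r (n+2)) ++ sseq (dseq r) (n+1)).length
      rw [List.length_append, lpow_length, dseq_ge2 r (n+2) (by omega)]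
      have : (sseq (dseq r) (n+2)).length ≤ r * (sseq (dseq r) (n+2)).length :=
        Nat.le_mul_of_pos_left _ hr
      omega

end Aux

/-- For α = [0;2,\overline{r}] (r ≥ 1) and 0 ≤ k ≤ q_{m+1} − 2, the k-th
right conjugate of σ^m applied to c_α deletes the first k letters of c_α, i.e.
(σ^m)_k(c_α) = v⁻¹c_α where v is the prefix of c_α of length k. -/
theorem statement3 (r : ℕ) (hr : 1 ≤ r)
    (c : ℕ → AB) (hc : ∀ n, PrefInf (sseq (dseq r) (n + 1)) c)
    (k m : ℕ) (hk : k ≤ qseq (dseq r) (m + 1) - 2)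
    (ξ : AB → List AB) (hξ : IsRightConj (mpow (sigmaGen (dseq r) 2) m) ξ k) :
    applyInf ξ c = fun i => c (i + k) := by
  obtain ⟨u, hu, hconj⟩ := hξ
  set σ := sigmaGen (dseq r) 2 with hσ
  set ψ := mpow σ m with hψ
  have hψne : ∀ z, ψ z ≠ [] := mpow_ne r m
  have hlen_eq : ∀ v : List AB, (applyM ξ v).length = (applyM ψ v).length := by
    intro v
    have := congrArg List.length (hconj v)
    simp only [List.length_append] at this
    omega
  have hξlen : ∀ v : List AB, v.length ≤ (applyM ξ v).length := by
    intro v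
    rw [hlen_eq]
    exact applyM_length_ge ψ hψne v
  funext i
  show (applyM ξ ((List.range (i+1)).map c)).getD i AB.a = c (i + k)
  set N := k + i + 1 with hN
  set w := sseq (dseq r) (N+1) with hw
  have hwpref : PrefInf w c := hc N
  have hwlen : k + i + 1 ≤ w.length := sseq_len_ge r hr N
  -- the prefix of c of length i+1 equals w.take (i+1)
  have htake : (List.range (i+1)).map c = w.take (i+1) := by
    apply List.ext_getElem
    · simp; omega
    · intro j h1 h2
      simp only [List.getElem_map, List.getElem_range, List.getElem_take]
      have hj : j < w.length := by
        simp at h1; omega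
      have := hwpref j hj
      rw [List.getD_eq_getElem w AB.a hj] at this
      exact this.symm
  rw [htake]
  -- pass to the full w
  have hsplit : applyM ξ w = applyM ξ (w.take (i+1)) ++ applyM ξ (w.drop (i+1)) := by
    rw [← applyM_append, List.take_append_drop]
  have hlen1 : i + 1 ≤ (applyM ξ (w.take (i+1))).length := by
    have : (w.take (i+1)).length = i + 1 := by
      rw [List.length_take]; omega
    calc i + 1 = (w.take (i+1)).length := this.symm
      _ ≤ _ := hξlen _
  have hgd : (applyM ξ (w.take (i+1))).getD i AB.a = (applyM ξ w).getD i AB.a := by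
    rw [hsplit, List.getD_append _ _ _ _ (by omega)]
  rw [hgd]
  -- use the conjugacy relation
  have key : applyM ψ w ++ u = u ++ applyM ξ w := hconj w
  have h1 : (applyM ξ w).getD i AB.a = (u ++ applyM ξ w).getD (k + i) AB.a := by
    rw [List.getD_append_right _ _ _ _ (by omega : u.length ≤ k + i), hu]
    congr 1
    omega
  rw [h1, ← key]
  -- ψ(w) is a long prefix of c
  have hψw : applyM ψ w = sseq (dseq r) (N+1+m) := mpow_sseq r hr m N
  have hψwlen : k + i + 1 ≤ (applyM ψ w).length :=
    le_trans hwlen (applyM_length_ge ψ hψne w)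
  have hψpref : PrefInf (applyM ψ w) c := by
    rw [hψw]
    have := hc (N+m)
    have he : N + m + 1 = N + 1 + m := by omega
    rw [he] at this
    exact this
  rw [List.getD_append _ _ _ _ (by omega : k + i < (applyM ψ w).length)]
  have := hψpref (k+i) (by omega)
  rw [this]
  congr 1
  omega
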